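/- Let s : (0, π) → ℝ be differentiable satisfying s' + s² + r = 0 with r : (0,π) → ℝ continuous and r ≥ 1. If s(t) ≥ cot(t) for all t ∈ (0, π), then s(t) = cot(t) for all t ∈ (0, π). -/

import Mathlib

open Real Set

/-- If `s' + s² + r = 0` on `(0, π)` with `r ≥ 1` continuous and `s ≥ cot` everywhere on
`(0, π)`, then `s = cot` on `(0, π)`. -/
theorem stmt_5 (s r : ℝ → ℝ)
    (hs : ∀ t ∈ Set.Ioo 0 π, HasDerivAt s (-(s t ^ 2 + r t)) t)
    (hrc : ContinuousOn r (Set.Ioo 0 π))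
    (hr : ∀ t ∈ Set.Ioo 0 π, 1 ≤ r t)
    (hge : ∀ t ∈ Set.Ioo 0 π, Real.cot t ≤ s t) :
    ∀ t ∈ Set.Ioo 0 π, s t = Real.cot t := by
  have hsin : ∀ t ∈ Set.Ioo (0:ℝ) π, 0 < Real.sin t := fun t ht =>
    Real.sin_pos_of_pos_of_lt_pi ht.1 ht.2
  set g : ℝ → ℝ := fun t => Real.sin t ^ 2 * s t - Real.sin t * Real.cos t with hgdef
  -- derivative of g
  have hgd : ∀ t ∈ Set.Ioo (0:ℝ) π, HasDerivAt g
      (-((Real.sin t * s t - Real.cos t) ^ 2 + Real.sin t ^ 2 * (r t - 1))) t := by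
    intro t ht
    have h1 := (((Real.hasDerivAt_sin t).pow 2).mul (hs t ht)).sub
      ((Real.hasDerivAt_sin t).mul (Real.hasDerivAt_cos t))
    have hpyth := Real.sin_sq_add_cos_sq t
    refine h1.congr_deriv ?_
    simp only [Pi.pow_apply]
    norm_num
    nlinarith [hpyth]
  have hganti : AntitoneOn g (Set.Ioo 0 π) := by
    apply antitoneOn_of_hasDerivWithinAt_nonpos (convex_Ioo 0 π)
    · exact fun t ht => ((hgd t ht).continuousAt).continuousWithinAt
    · intro t ht
      rw [interior_Ioo] at ht ⊢
      exact (hgd t ht).hasDerivWithinAt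
    · intro t ht
      rw [interior_Ioo] at ht
      nlinarith [sq_nonneg (Real.sin t * s t - Real.cos t), sq_nonneg (Real.sin t),
        hr t ht]
  have hgnonneg : ∀ t ∈ Set.Ioo (0:ℝ) π, 0 ≤ g t := by
    intro t ht
    have h1 := hge t ht
    have h2 := hsin t ht
    rw [Real.cot_eq_cos_div_sin, div_le_iff₀ h2] at h1
    simp only [hgdef]
    nlinarith
  intro t₀ ht₀
  have key : g t₀ ≤ 0 := by
    by_contra hc
    push_neg at hc
    set c := g t₀ with hcdef
    clear_value c
    set m := min t₀ (π / 2) with hmdef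
    clear_value m
    have hmt₀ : m ≤ t₀ := by rw [hmdef]; exact min_le_left _ _
    have hm2 : m ≤ π / 2 := by rw [hmdef]; exact min_le_right _ _
    have hm0 : 0 < m := by rw [hmdef]; exact lt_min ht₀.1 (by positivity)
    have hmπ : m < π := by linarith [Real.pi_pos]
    have hIsub : Set.Ioo (0:ℝ) m ⊆ Set.Ioo 0 π := Set.Ioo_subset_Ioo le_rfl hmπ.le
    -- lower bound for s on Ioo 0 m
    have hslb : ∀ t ∈ Set.Ioo (0:ℝ) m, c / Real.sin t ^ 2 ≤ s t := by
      intro t ht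
      have htπ := hIsub ht
      have hgt : c ≤ g t := by rw [hcdef]; exact hganti htπ ht₀ (le_trans ht.2.le hmt₀)
      have hsint := hsin t htπ
      have hcost : 0 ≤ Real.cos t :=
        Real.cos_nonneg_of_mem_Icc ⟨by linarith [ht.1], le_trans ht.2.le hm2⟩
      rw [div_le_iff₀ (by positivity)]
      simp only [hgdef] at hgt
      nlinarith
    have hspos : ∀ t ∈ Set.Ioo (0:ℝ) m, 0 < s t := by
      intro t ht
      have h1 := hslb t ht
      have hsint := hsin t (hIsub ht)
      have : 0 < c / Real.sin t ^ 2 := by positivity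
      linarith
    -- q = 1/s - t is monotone on Ioo 0 m
    set q : ℝ → ℝ := fun t => (s t)⁻¹ - t with hqdef
    have hqd : ∀ t ∈ Set.Ioo (0:ℝ) m, HasDerivAt q (r t / s t ^ 2) t := by
      intro t ht
      have hst := (hspos t ht).ne'
      have h1 := ((hs t (hIsub ht)).inv hst).sub (hasDerivAt_id t)
      refine h1.congr_deriv ?_
      simp only [neg_neg]
      rw [div_sub_one (pow_ne_zero 2 hst)]
      ring
    have hqmono : MonotoneOn q (Set.Ioo 0 m) := by
      apply monotoneOn_of_hasDerivWithinAt_nonneg (convex_Ioo 0 m)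
      · exact fun t ht => ((hqd t ht).continuousAt).continuousWithinAt
      · intro t ht
        rw [interior_Ioo] at ht ⊢
        exact (hqd t ht).hasDerivWithinAt
      · intro t ht
        rw [interior_Ioo] at ht
        have h1 : (0:ℝ) < r t := lt_of_lt_of_le one_pos (hr t (hIsub ht))
        have h2 := hspos t ht
        positivity
    set t₁ := min m c / 2 with ht₁def
    clear_value t₁
    have hmc : 0 < min m c := lt_min hm0 hc
    have ht₁0 : 0 < t₁ := by rw [ht₁def]; positivity
    have ht₁m : t₁ < m := by
      have h4 : min m c ≤ m := min_le_left _ _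
      rw [ht₁def]; linarith
    have ht₁I : t₁ ∈ Set.Ioo (0:ℝ) m := ⟨ht₁0, ht₁m⟩
    have hxI : t₁ / 2 ∈ Set.Ioo (0:ℝ) m := ⟨by positivity, by linarith⟩
    have hle := hqmono hxI ht₁I (by linarith)
    -- q t₁ ≤ -t₁/2
    have hsin₁ : Real.sin t₁ ≤ t₁ := Real.sin_le ht₁0.le
    have hsin₁0 : 0 < Real.sin t₁ := hsin t₁ (hIsub ht₁I)
    have hsq : Real.sin t₁ ^ 2 ≤ t₁ ^ 2 := by nlinarith
    have hs₁ : c / Real.sin t₁ ^ 2 ≤ s t₁ := hslb t₁ ht₁I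
    have hs₁pos : 0 < s t₁ := hspos t₁ ht₁I
    have hinv : (s t₁)⁻¹ ≤ Real.sin t₁ ^ 2 / c := by
      have h := inv_anti₀ (by positivity : (0:ℝ) < c / Real.sin t₁ ^ 2) hs₁
      rwa [inv_div] at h
    have hA : (s t₁)⁻¹ ≤ t₁ ^ 2 / c := le_trans hinv (by gcongr)
    have ht₁c : t₁ ≤ c / 2 := by
      have h2 : min m c ≤ c := min_le_right m c
      rw [ht₁def]; linarith
    have hB : t₁ ^ 2 / c ≤ t₁ / 2 := by
      rw [div_le_iff₀ hc]; nlinarith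
    have hxpos : 0 < (s (t₁ / 2))⁻¹ := by
      have := hspos (t₁ / 2) hxI; positivity
    simp only [hqdef] at hle
    linarith
  have h0 := hgnonneg t₀ ht₀
  have hz : g t₀ = 0 := le_antisymm key h0
  have hsint₀ := hsin t₀ ht₀
  rw [Real.cot_eq_cos_div_sin, eq_div_iff hsint₀.ne']
  simp only [hgdef] at hz
  nlinarith
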